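/- Let N ≥ 2, d ≥ 1 be integers, ρ_c := d·(N-1)/(N+1), and ρ_c < ρ ≤ 2. Then there exists κ₀ > 0 such that for every κ ∈ (0,κ₀), setting α₀ := -(ρ+d)/2 - κ, the number h⁰ := card{(p,q) ∈ ℕ × ℕ₀ : N·p ≤ N + (N-1)·q and p·α₀ + q·ρ < 0} of lattice points of the cone with negative homogeneity satisfies ((ρ+d)/(N+1))·(ρ - ρ_c)^{-1} ≤ h⁰ ≤ 1 + ((ρ+d)·N/(N+1))·(ρ - ρ_c)^{-1}. -/

import Mathlib

def auxA (c j : ℕ) : ℕ := j + (j + c) / (c + 1)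

lemma auxA_mul_ge (c j : ℕ) : (c+2)*j ≤ (c+1) * auxA c j := by
  have dm := Nat.div_add_mod (j + c) (c + 1)
  have hr : (j + c) % (c + 1) < c + 1 := Nat.mod_lt _ (by omega)
  have h1 : j + c ≤ (c+1) * ((j+c)/(c+1)) + c :=
    calc j + c = (c+1) * ((j+c)/(c+1)) + (j+c) % (c+1) := dm.symm
      _ ≤ (c+1) * ((j+c)/(c+1)) + c := Nat.add_le_add_left (by omega) _
  have h2 : j ≤ (c+1) * ((j+c)/(c+1)) := Nat.le_of_add_le_add_right h1
  calc (c+2)*j = (c+1)*j + j := by ring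
    _ ≤ (c+1)*j + (c+1)*((j+c)/(c+1)) := Nat.add_le_add_left h2 _
    _ = (c+1) * auxA c j := by rw [auxA]; ring

lemma auxA_mul_le (c j : ℕ) : (c+1) * auxA c j ≤ (c+2)*j + c := by
  have dm := Nat.div_add_mod (j + c) (c + 1)
  have h1 : (c+1) * ((j+c)/(c+1)) ≤ j + c := Nat.le.intro dm
  calc (c+1) * auxA c j = (c+1)*j + (c+1)*((j+c)/(c+1)) := by rw [auxA]; ring
    _ ≤ (c+1)*j + (j + c) := Nat.add_le_add_left h1 _
    _ = (c+2)*j + c := by ring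

lemma auxA_le_of (c j q : ℕ) (h : (c+2)*j ≤ (c+1)*q) : auxA c j ≤ q := by
  rw [auxA]
  by_contra hcon
  push_neg at hcon
  have h3 : (c+1)*(q+1) ≤ (c+1)*(j + (j+c)/(c+1)) := Nat.mul_le_mul le_rfl hcon
  have dm := Nat.div_add_mod (j + c) (c + 1)
  have hr : (j + c) % (c + 1) < c + 1 := Nat.mod_lt _ (by omega)
  have hr0 : 0 ≤ (j + c) % (c + 1) := Nat.zero_le _
  zify at h h3 dm hr hr0
  nlinarith [h, h3, dm, hr, hr0]

lemma sum_window (c t : ℕ) : ∑ j ∈ Finset.range (c+1), (t + j)/(c+1) = t := by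
  induction t with
  | zero =>
    apply Finset.sum_eq_zero
    intro j hj
    have : j < c + 1 := Finset.mem_range.mp hj
    simp only [Nat.zero_add]
    exact Nat.div_eq_of_lt this
  | succ t ih =>
    have h1 := Finset.sum_range_succ' (fun j => (t + j)/(c+1)) (c+1)
    have h2 := Finset.sum_range_succ (fun j => (t + j)/(c+1)) (c+1)
    have h3 : (t + (c+1))/(c+1) = t/(c+1) + 1 := Nat.add_div_right t (by omega)
    have h4 : ∑ j ∈ Finset.range (c+1), (t+1+j)/(c+1)
        = ∑ j ∈ Finset.range (c+1), (t+(j+1))/(c+1) :=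
      Finset.sum_congr rfl (fun j _ => by congr 1; omega)
    rw [h4]
    simp only [Nat.add_zero] at h1
    rw [h2, h3, ih] at h1
    obtain ⟨u, hu⟩ : ∃ u, t/(c+1) = u := ⟨_, rfl⟩
    rw [hu] at h1
    exact Nat.add_right_cancel ((h1.symm).trans (by omega : t + (u + 1) = (t+1) + u))

def Sn (c P : ℕ) : ℕ := ∑ j ∈ Finset.range P, (j + c)/(c+1)

lemma Sn_add (c Q : ℕ) : Sn c (Q + (c+1)) = Sn c Q + (Q + c) := by
  rw [Sn, Sn, Finset.range_eq_Ico,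
    ← Finset.sum_Ico_consecutive _ (Nat.zero_le Q) (Nat.le_add_right Q (c+1)),
    ← Finset.range_eq_Ico]
  congr 1
  rw [Finset.sum_Ico_eq_sum_range]
  have h0 : Q + (c+1) - Q = c + 1 := by omega
  rw [h0]
  have h4 : ∑ i ∈ Finset.range (c+1), (Q + i + c)/(c+1)
      = ∑ i ∈ Finset.range (c+1), ((Q + c) + i)/(c+1) :=
    Finset.sum_congr rfl (fun i _ => by congr 1; omega)
  rw [h4, sum_window]

lemma Sn_ge_lin (c : ℕ) : ∀ P : ℕ, P - 1 ≤ Sn c P := by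
  intro P
  induction P with
  | zero => simp [Sn]
  | succ Q ih =>
    have h1 : Sn c (Q+1) = Sn c Q + (Q + c)/(c+1) := Finset.sum_range_succ _ _
    rcases Nat.eq_zero_or_pos Q with h | h
    · subst h; simp
    · have h2 : 1 ≤ (Q + c)/(c+1) := (Nat.one_le_div_iff (by omega)).mpr (by omega)
      obtain ⟨u, hu⟩ : ∃ u, (Q + c)/(c+1) = u := ⟨_, rfl⟩
      rw [hu] at h1 h2
      omega

lemma sum_cast_id (P : ℕ) : ∑ j ∈ Finset.range P, (j:ℝ) = (P:ℝ)*((P:ℝ)-1)/2 := by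
  induction P with
  | zero => simp
  | succ P ih => rw [Finset.sum_range_succ, ih]; push_cast; ring

lemma Sn_ge (c : ℕ) (P : ℕ) (hP : 1 ≤ P) :
    ((P:ℝ)-1)^2/(2*((c:ℝ)+1)) + ((P:ℝ)-1)/2 ≤ (Sn c P : ℝ) := by
  induction P using Nat.strong_induction_on with
  | _ P ih =>
    rcases le_or_gt P (c+1) with hle | hgt
    · have h1 : P - 1 ≤ Sn c P := Sn_ge_lin c P
      have h1' : (P:ℝ) - 1 ≤ (Sn c P : ℝ) := by
        have := (Nat.cast_le (α := ℝ)).mpr h1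
        rw [Nat.cast_sub hP] at this; simpa using this
      have hcle : (P:ℝ) ≤ (c:ℝ)+1 := by exact_mod_cast hle
      have hP1 : (1:ℝ) ≤ (P:ℝ) := by exact_mod_cast hP
      have key : ((P:ℝ)-1)^2/(2*((c:ℝ)+1)) ≤ ((P:ℝ)-1)/2 := by
        rw [div_le_div_iff₀ (by positivity) (by norm_num)]
        nlinarith
      linarith
    · obtain ⟨Q, rfl⟩ : ∃ Q, P = Q + (c+1) := ⟨P - (c+1), by omega⟩
      have hQ1 : 1 ≤ Q := by omega
      have ihQ := ih Q (by omega) hQ1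
      rw [Sn_add]
      have hQr : (1:ℝ) ≤ (Q:ℝ) := by exact_mod_cast hQ1
      push_cast
      have hexp : ((Q:ℝ)+((c:ℝ)+1)-1)^2/(2*((c:ℝ)+1)) + ((Q:ℝ)+((c:ℝ)+1)-1)/2
          = ((Q:ℝ)-1)^2/(2*((c:ℝ)+1)) + ((Q:ℝ)-1)/2 + ((Q:ℝ) + (c:ℝ)) := by
        field_simp
        ring
      linarith

lemma Sn_eq (c m : ℕ) : (Sn c (m*(c+1)+1) : ℝ) = ((c:ℝ)+1)*(m:ℝ)*((m:ℝ)+1)/2 := by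
  induction m with
  | zero =>
    simp only [Nat.zero_mul, Nat.zero_add, Sn, Finset.sum_range_one]
    rw [Nat.div_eq_of_lt (by omega)]
    push_cast; ring
  | succ m ih =>
    have h0 : (m+1)*(c+1)+1 = (m*(c+1)+1) + (c+1) := by ring
    rw [h0, Sn_add]
    push_cast [ih]
    ring

lemma sum_shape (c P : ℕ) (A : ℝ) :
    ∑ j ∈ Finset.range P, (((j:ℝ)+1)*A + 1 - ((auxA c j : ℕ):ℝ))
      = A*((P:ℝ)*((P:ℝ)+1))/2 + (P:ℝ) - ((P:ℝ)*((P:ℝ)-1)/2 + ((Sn c P):ℝ)) := by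
  induction P with
  | zero => simp [Sn]
  | succ P ih =>
    have h1 : Sn c (P+1) = Sn c P + (P + c)/(c+1) := Finset.sum_range_succ _ _
    rw [Finset.sum_range_succ, ih, h1, auxA]
    push_cast
    ring

lemma sum_shape2 (c P : ℕ) (A : ℝ) :
    ∑ j ∈ Finset.range P, (((j:ℝ)+1)*A - ((auxA c j : ℕ):ℝ))
      = A*((P:ℝ)*((P:ℝ)+1))/2 - ((P:ℝ)*((P:ℝ)-1)/2 + ((Sn c P):ℝ)) := by
  induction P with
  | zero => simp [Sn]
  | succ P ih =>
    have h1 : Sn c (P+1) = Sn c P + (P + c)/(c+1) := Finset.sum_range_succ _ _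
    rw [Finset.sum_range_succ, ih, h1, auxA]
    push_cast
    ring


/-- The set of lattice points `(p,q)` of the cone `{p ≥ 1, Np ≤ N + (N-1)q}`
carrying negative homogeneity `p α₀ + q ρ < 0`, with `α₀ = -(ρ+d)/2 - κ`. -/
def negHomogPairs (N d : ℕ) (ρ κ : ℝ) : Set (ℕ × ℕ) :=
  {pq | 1 ≤ pq.1 ∧ N * pq.1 ≤ N + (N - 1) * pq.2 ∧
    (pq.1 : ℝ) * (-(ρ + (d : ℝ)) / 2 - κ) + (pq.2 : ℝ) * ρ < 0}

section Main

variable {c d : ℕ} {ρ κ A s x : ℝ} {Pm : ℕ} {bN : ℕ → ℕ}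

set_option maxHeartbeats 1000000 in
lemma negHomog_set_eq
    (hρ0 : 0 < ρ) (hκ0 : 0 < κ)
    (hA_def : A = (ρ + (d:ℝ))/(2*ρ))
    (hs_def : s = ((c:ℝ)+2)/((c:ℝ)+1) - A)
    (hbN_def : bN = fun p : ℕ => ⌊(p:ℝ)*A⌋₊ + 1)
    (hκgap : ((c:ℝ)+2)/(((c:ℝ)+1)*((Pm:ℝ)+1)) < s - κ/ρ)
    (hκf : ∀ p : ℕ, 1 ≤ p → p ≤ Pm → ((p:ℝ))*κ < ρ*(((⌊(p:ℝ)*A⌋₊:ℝ) + 1) - (p:ℝ)*A)) :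
    negHomogPairs (c+2) d ρ κ
      = ↑((Finset.range Pm).biUnion
          (fun j => {j+1} ×ˢ Finset.Ico (auxA c j) (bN (j+1)))) := by
  have hsub1 : c + 2 - 1 = c + 1 := rfl
  have hAe : ((c:ℝ)+1)*A = ((c:ℝ)+2) - ((c:ℝ)+1)*s := by
    rw [hs_def]; field_simp; ring
  have hAρ : A*ρ = (ρ + (d:ℝ))/2 := by rw [hA_def]; field_simp
  ext ⟨p, q⟩
  simp only [negHomogPairs, Set.mem_setOf_eq, hsub1]
  constructor
  · rintro ⟨h1, h2, h3⟩
    obtain ⟨p', rfl⟩ : ∃ p', p = p' + 1 := ⟨p - 1, by omega⟩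
    -- cone in subtracted form
    have h2' : (c+2)*p' ≤ (c+1)*q := by
      have e : (c+2)*(p'+1) = (c+2)*p' + (c+2) := by ring
      rw [e] at h2
      have h2'' : (c+2)*p' + (c+2) ≤ (c+1)*q + (c+2) := by
        rw [Nat.add_comm ((c+1)*q) (c+2)]; exact h2
      exact Nat.le_of_add_le_add_right h2''
    -- homogeneity in product form
    have hq3 : (q:ℝ)*ρ < ((p':ℝ)+1)*((ρ+(d:ℝ))/2 + κ) := by
      push_cast at h3
      nlinarith [h3]
    have hqA : (q:ℝ) < ((p':ℝ)+1)*(A + κ/ρ) := by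
      have e : (ρ+(d:ℝ))/2 + κ = (A + κ/ρ)*ρ := by rw [hA_def]; field_simp
      have e2 : ((p':ℝ)+1)*((A + κ/ρ)*ρ) = (((p':ℝ)+1)*(A + κ/ρ))*ρ := by ring
      rw [e, e2] at hq3
      exact lt_of_mul_lt_mul_right hq3 hρ0.le
    have hql : auxA c p' ≤ q := auxA_le_of c p' q h2'
    -- p' + 1 ≤ Pm
    have hcast2 : ((c:ℝ)+2)*(p':ℝ) ≤ ((c:ℝ)+1)*(q:ℝ) := by exact_mod_cast h2'
    have hE : ((c:ℝ)+2) < (s - κ/ρ)*(((c:ℝ)+1)*((Pm:ℝ)+1)) := by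
      rw [div_lt_iff₀ (by positivity)] at hκgap
      linarith [hκgap]
    have hmulq := mul_lt_mul_of_pos_left hqA (by positivity : (0:ℝ) < (c:ℝ)+1)
    have hAe2 : ((p':ℝ)+1)*(((c:ℝ)+1)*A) = ((p':ℝ)+1)*(((c:ℝ)+2) - ((c:ℝ)+1)*s) := by
      rw [hAe]
    have key : ((p':ℝ)+1)*(((c:ℝ)+1)*(s - κ/ρ)) < (c:ℝ)+2 := by
      nlinarith [hcast2, hmulq, hAe2]
    have hp'0 : (0:ℝ) < (p':ℝ)+1 := by positivity
    have hm1 := mul_lt_mul_of_pos_left hE hp'0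
    have hm2 := mul_lt_mul_of_pos_right key (by positivity : (0:ℝ) < (Pm:ℝ)+1)
    have hppm : ((p':ℝ)+1)*((c:ℝ)+2) < ((c:ℝ)+2)*((Pm:ℝ)+1) := by nlinarith [hm1, hm2]
    have hplt : (p':ℝ)+1 < (Pm:ℝ)+1 := by nlinarith [hppm]
    have hpPm : p' + 1 ≤ Pm := by
      have : (p':ℕ) + 1 < Pm + 1 := by exact_mod_cast hplt
      omega
    -- q < bN (p'+1)
    have hp1c : ((p'+1:ℕ):ℝ) = (p':ℝ)+1 := by push_cast; ring
    have h7 := hκf (p'+1) (by omega) hpPm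
    rw [hp1c] at h7
    have hqb : q < bN (p'+1) := by
      have h8 : ((p':ℝ)+1)*(κ/ρ) < ((⌊((p':ℝ)+1)*A⌋₊:ℝ) + 1) - ((p':ℝ)+1)*A := by
        rw [mul_div_assoc', div_lt_iff₀ hρ0]
        nlinarith [h7]
      have h9 : (q:ℝ) < (⌊((p':ℝ)+1)*A⌋₊:ℝ) + 1 := by
        nlinarith [hqA, h8]
      have h10 : (q:ℝ) < ((bN (p'+1) : ℕ):ℝ) := by
        simp only [hbN_def]
        push_cast
        exact h9
      exact_mod_cast h10
    refine Finset.mem_coe.mpr (Finset.mem_biUnion.mpr ⟨p', Finset.mem_range.mpr (by omega), ?_⟩)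
    rw [Finset.mem_product, Finset.mem_singleton]
    exact ⟨rfl, Finset.mem_Ico.mpr ⟨hql, hqb⟩⟩
  · intro hmem
    obtain ⟨j, hj, hj2⟩ := Finset.mem_biUnion.mp (Finset.mem_coe.mp hmem)
    rw [Finset.mem_product, Finset.mem_singleton, Finset.mem_Ico] at hj2
    have hp := hj2.1
    have hq1 := hj2.2.1
    have hq2 := hj2.2.2
    subst hp
    refine ⟨by omega, ?_, ?_⟩
    · -- cone
      calc (c+2)*(j+1) = (c+2)*j + (c+2) := by ring
        _ ≤ (c+1)*(auxA c j) + (c+2) := Nat.add_le_add_right (auxA_mul_ge c j) _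
        _ ≤ (c+1)*q + (c+2) := Nat.add_le_add_right (Nat.mul_le_mul le_rfl hq1) _
        _ = (c+2) + (c+1)*q := by ring
    · -- homogeneity
      have hq2' : q ≤ ⌊((j+1:ℕ):ℝ)*A⌋₊ := by
        simp only [hbN_def] at hq2
        exact Nat.lt_succ_iff.mp hq2
      have hq_le : (q:ℝ) ≤ ((j:ℝ)+1)*A := by
        have h1 : ((q:ℕ):ℝ) ≤ ((⌊((j+1:ℕ):ℝ)*A⌋₊:ℕ):ℝ) := by exact_mod_cast hq2'
        have hA0 : 0 ≤ A := by rw [hA_def]; positivity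
        have h2 : ((⌊((j+1:ℕ):ℝ)*A⌋₊:ℕ):ℝ) ≤ ((j+1:ℕ):ℝ)*A :=
          Nat.floor_le (mul_nonneg (by positivity) hA0)
        have h3 : ((j+1:ℕ):ℝ) = (j:ℝ)+1 := by push_cast; ring
        rw [h3] at h1 h2
        linarith
      have h9 := mul_le_mul_of_nonneg_right hq_le hρ0.le
      have h10 : (0:ℝ) < ((j:ℝ)+1)*κ := by positivity
      push_cast
      have e : ((j:ℝ)+1)*(-(ρ+(d:ℝ))/2 - κ) + (q:ℝ)*ρ
          = (q:ℝ)*ρ - ((j:ℝ)+1)*(A*ρ) - ((j:ℝ)+1)*κ := by rw [hAρ]; ring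
      rw [e]
      nlinarith [h9, h10]

end Main

set_option maxHeartbeats 1000000 in
lemma lower_bound_sum (c d : ℕ) (ρ A s x : ℝ) (Pm : ℕ) (bN : ℕ → ℕ)
    (hd1 : (1:ℝ) ≤ (d:ℝ)) (hρ0 : 0 < ρ) (hρ2 : ρ ≤ 2)
    (hρc2 : (d:ℝ)*((c:ℝ)+1) < ρ*((c:ℝ)+3))
    (hA_def : A = (ρ + (d:ℝ))/(2*ρ))
    (hs_def : s = ((c:ℝ)+2)/((c:ℝ)+1) - A)
    (hs0 : 0 < s)
    (hx_def : x = ((c:ℝ)+2)/(((c:ℝ)+1)*s))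
    (hbN_def : bN = fun p : ℕ => ⌊(p:ℝ)*A⌋₊ + 1)
    (hPm1 : 1 ≤ Pm) (hPmx : (Pm:ℝ) ≤ x) (hxPm : x < (Pm:ℝ)+1) :
    (ρ + (d:ℝ))/(ρ*((c:ℝ)+3) - (d:ℝ)*((c:ℝ)+1))
      ≤ ((∑ j ∈ Finset.range Pm, (bN (j+1) - auxA c j) : ℕ) : ℝ) := by
  have hc0 : (0:ℝ) ≤ (c:ℝ) := Nat.cast_nonneg c
  have hc1 : (0:ℝ) < (c:ℝ)+1 := by positivity
  have hA0 : 0 < A := by rw [hA_def]; positivity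
  have hA34 : 3/4 ≤ A := by
    rw [hA_def, le_div_iff₀ (by positivity)]
    nlinarith
  have hsx : x*(((c:ℝ)+1)*s) = (c:ℝ)+2 := by rw [hx_def]; field_simp
  have hw : 0 < ρ*((c:ℝ)+3) - (d:ℝ)*((c:ℝ)+1) := by linarith [hρc2]
  have hAe : ((c:ℝ)+1)*A = ((c:ℝ)+2) - ((c:ℝ)+1)*s := by rw [hs_def]; field_simp; ring
  have hswe : s = (ρ*((c:ℝ)+3) - (d:ℝ)*((c:ℝ)+1))/(2*ρ*((c:ℝ)+1)) := by
    rw [hs_def, hA_def]; field_simp; ring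
  by_cases hdρ : ρ < (d:ℝ)
  · -- main regime : d > ρ
    set m₀ : ℕ := ⌊(3*A-2)/(2*((c:ℝ)+1)*s) + 1/2⌋₊ with hm₀_def
    clear_value m₀
    -- per-term estimates
    have t1 : ∀ j : ℕ, ((j:ℝ)+1)*A - ((auxA c j : ℕ):ℝ) ≤ ((bN (j+1) - auxA c j : ℕ):ℝ) := by
      intro j
      have hfl : ((j:ℝ)+1)*A < (⌊((j:ℝ)+1)*A⌋₊:ℝ) + 1 := Nat.lt_floor_add_one _
      have hbcast : ((bN (j+1) : ℕ):ℝ) = (⌊((j:ℝ)+1)*A⌋₊:ℝ) + 1 := by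
        simp only [hbN_def]; push_cast; ring
      rcases le_total (auxA c j) (bN (j+1)) with h | h
      · rw [Nat.cast_sub h, hbcast]; linarith
      · rw [Nat.sub_eq_zero_of_le h]
        have h6 : ((bN (j+1) : ℕ):ℝ) ≤ ((auxA c j : ℕ):ℝ) := by exact_mod_cast h
        rw [hbcast] at h6
        push_cast
        linarith [hfl, h6]
    have t2 : ∀ j : ℕ, Pm ≤ j → ((j:ℝ)+1)*A - ((auxA c j : ℕ):ℝ) ≤ 0 := by
      intro j hj
      have hj' : (Pm:ℝ) + 1 ≤ (j:ℝ) + 1 := by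
        have : (Pm:ℝ) ≤ (j:ℝ) := by exact_mod_cast hj
        linarith
      have hxj : x < (j:ℝ)+1 := lt_of_lt_of_le hxPm hj'
      have hga' : ((c:ℝ)+2)*(j:ℝ) ≤ ((c:ℝ)+1)*((auxA c j : ℕ):ℝ) := by
        exact_mod_cast auxA_mul_ge c j
      have hprod := mul_lt_mul_of_pos_right hxj (by positivity : (0:ℝ) < ((c:ℝ)+1)*s)
      rw [hsx] at hprod
      have hmul : ((c:ℝ)+1)*(((j:ℝ)+1)*A) ≤ ((c:ℝ)+1)*((auxA c j : ℕ):ℝ) := by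
        nlinarith [hga', hprod, hAe]
      have := le_of_mul_le_mul_left hmul hc1
      linarith
    -- master inequality
    have hcastsum : ((∑ j ∈ Finset.range Pm, (bN (j+1) - auxA c j) : ℕ):ℝ)
        = ∑ j ∈ Finset.range Pm, ((bN (j+1) - auxA c j : ℕ):ℝ) := by push_cast; rfl
    have master : ∑ j ∈ Finset.range (m₀*(c+1)+1), (((j:ℝ)+1)*A - ((auxA c j : ℕ):ℝ))
        ≤ ((∑ j ∈ Finset.range Pm, (bN (j+1) - auxA c j) : ℕ):ℝ) := by
      rw [hcastsum]
      rcases le_or_gt (m₀*(c+1)+1) Pm with h | h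
      · calc ∑ j ∈ Finset.range (m₀*(c+1)+1), (((j:ℝ)+1)*A - ((auxA c j : ℕ):ℝ))
            ≤ ∑ j ∈ Finset.range (m₀*(c+1)+1), ((bN (j+1) - auxA c j : ℕ):ℝ) :=
              Finset.sum_le_sum (fun j _ => t1 j)
          _ ≤ ∑ j ∈ Finset.range Pm, ((bN (j+1) - auxA c j : ℕ):ℝ) :=
              Finset.sum_le_sum_of_subset_of_nonneg (Finset.range_subset_range.mpr h)
                (fun j _ _ => by positivity)
      · have hsplit : ∑ j ∈ Finset.range (m₀*(c+1)+1), (((j:ℝ)+1)*A - ((auxA c j : ℕ):ℝ))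
            = ∑ j ∈ Finset.range Pm, (((j:ℝ)+1)*A - ((auxA c j : ℕ):ℝ))
              + ∑ j ∈ Finset.Ico Pm (m₀*(c+1)+1), (((j:ℝ)+1)*A - ((auxA c j : ℕ):ℝ)) := by
          simp only [Finset.range_eq_Ico]
          exact (Finset.sum_Ico_consecutive _ (Nat.zero_le Pm) h.le).symm
        rw [hsplit]
        have h1 : ∑ j ∈ Finset.Ico Pm (m₀*(c+1)+1), (((j:ℝ)+1)*A - ((auxA c j : ℕ):ℝ)) ≤ 0 :=
          Finset.sum_nonpos (fun j hj => t2 j (Finset.mem_Ico.mp hj).1)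
        have h2 : ∑ j ∈ Finset.range Pm, (((j:ℝ)+1)*A - ((auxA c j : ℕ):ℝ))
            ≤ ∑ j ∈ Finset.range Pm, ((bN (j+1) - auxA c j : ℕ):ℝ) :=
          Finset.sum_le_sum (fun j _ => t1 j)
        linarith
    rw [sum_shape2 c (m₀*(c+1)+1) A, Sn_eq c m₀] at master
    have hKc : ((m₀*(c+1)+1 : ℕ):ℝ) = (m₀:ℝ)*((c:ℝ)+1)+1 := by push_cast; ring
    rw [hKc] at master
    -- rounding facts
    have hms0 : 0 < (3*A-2)/(2*((c:ℝ)+1)*s) := div_pos (by linarith) (by positivity)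
    have hm0le : (m₀:ℝ) ≤ (3*A-2)/(2*((c:ℝ)+1)*s) + 1/2 := by
      rw [hm₀_def]
      exact Nat.floor_le (by positivity)
    have hm0gt : (3*A-2)/(2*((c:ℝ)+1)*s) + 1/2 < (m₀:ℝ) + 1 := by
      rw [hm₀_def]
      exact Nat.lt_floor_add_one _
    have hsq : ((m₀:ℝ) - (3*A-2)/(2*((c:ℝ)+1)*s))^2 ≤ (1/2)^2 :=
      sq_le_sq' (by linarith) (by linarith)
    -- sign of extra term
    have hsign : 0 ≤ ((c:ℝ)+6)*ρ - ((c:ℝ)+2)*(d:ℝ) := by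
      nlinarith [mul_lt_mul_of_pos_left hρc2 (show (0:ℝ) < (c:ℝ)+6 by positivity),
        mul_nonneg hc0 (mul_nonneg hc0 (le_trans zero_le_one hd1)),
        mul_nonneg hc0 (le_trans zero_le_one hd1)]
    -- the exact identity
    have hId : ∀ Kr mr : ℝ, Kr = mr*((c:ℝ)+1)+1 →
        A*(Kr*(Kr+1))/2 - (Kr*(Kr-1)/2 + ((c:ℝ)+1)*mr*(mr+1)/2)
          - (ρ+(d:ℝ))/(ρ*((c:ℝ)+3) - (d:ℝ)*((c:ℝ)+1))
        = (((c:ℝ)+1)^2*s/2)*((1/2)^2 - (mr - (3*A-2)/(2*((c:ℝ)+1)*s))^2)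
          + ((c:ℝ)*((d:ℝ)-ρ)*(((c:ℝ)+6)*ρ - ((c:ℝ)+2)*(d:ℝ)))/(32*s*ρ^2) := by
      intro Kr mr hK
      subst hK
      have hwne : ρ*((c:ℝ)+3) - (d:ℝ)*((c:ℝ)+1) ≠ 0 := ne_of_gt hw
      rw [hswe, hA_def]
      field_simp
      ring
    have hId' := hId ((m₀:ℝ)*((c:ℝ)+1)+1) (m₀:ℝ) rfl
    have hquad : (0:ℝ) ≤ (((c:ℝ)+1)^2*s/2)*((1/2)^2 - ((m₀:ℝ) - (3*A-2)/(2*((c:ℝ)+1)*s))^2) :=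
      mul_nonneg (by positivity) (by linarith [hsq])
    have hextra : (0:ℝ) ≤ ((c:ℝ)*((d:ℝ)-ρ)*(((c:ℝ)+6)*ρ - ((c:ℝ)+2)*(d:ℝ)))/(32*s*ρ^2) := by
      apply div_nonneg
      · exact mul_nonneg (mul_nonneg hc0 (by linarith)) hsign
      · positivity
    linarith [master, hId', hquad, hextra]
  · -- regime d ≤ ρ : the count is at least 1 ≥ T
    push_neg at hdρ
    have hT1 : (ρ+(d:ℝ))/(ρ*((c:ℝ)+3)-(d:ℝ)*((c:ℝ)+1)) ≤ 1 := by
      rw [div_le_one hw]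
      nlinarith [hdρ, hc0]
    have hone : 1 ≤ ∑ j ∈ Finset.range Pm, (bN (j+1) - auxA c j) := by
      have h0mem : 0 ∈ Finset.range Pm := Finset.mem_range.mpr (by omega)
      have ha0 : auxA c 0 = 0 := by
        rw [auxA]
        simp [Nat.div_eq_of_lt (by omega : c < c + 1)]
      have hb1 : 1 ≤ bN (0+1) := by simp [hbN_def]
      have hterm : 1 ≤ bN (0+1) - auxA c 0 := by omega
      have hs2 : bN (0+1) - auxA c 0 ≤ ∑ j ∈ Finset.range Pm, (bN (j+1) - auxA c j) :=
        Finset.single_le_sum (f := fun j => bN (j+1) - auxA c j)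
          (fun i _ => Nat.zero_le _) h0mem
      omega
    have hone' : (1:ℝ) ≤ ((∑ j ∈ Finset.range Pm, (bN (j+1) - auxA c j) : ℕ):ℝ) := by
      exact_mod_cast hone
    linarith

set_option maxHeartbeats 1000000 in
lemma upper_bound_sum (c d : ℕ) (ρ A s x : ℝ) (Pm : ℕ) (bN : ℕ → ℕ)
    (hd1 : (1:ℝ) ≤ (d:ℝ)) (hρ0 : 0 < ρ) (hρ2 : ρ ≤ 2)
    (hρc2 : (d:ℝ)*((c:ℝ)+1) < ρ*((c:ℝ)+3))
    (hA_def : A = (ρ + (d:ℝ))/(2*ρ))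
    (hs_def : s = ((c:ℝ)+2)/((c:ℝ)+1) - A)
    (hs0 : 0 < s)
    (hx_def : x = ((c:ℝ)+2)/(((c:ℝ)+1)*s))
    (hbN_def : bN = fun p : ℕ => ⌊(p:ℝ)*A⌋₊ + 1)
    (hPm1 : 1 ≤ Pm) (hPmx : (Pm:ℝ) ≤ x) (hxPm : x < (Pm:ℝ)+1) :
    ((∑ j ∈ Finset.range Pm, (bN (j+1) - auxA c j) : ℕ) : ℝ)
      ≤ 1 + (ρ + (d:ℝ))*((c:ℝ)+2)/(ρ*((c:ℝ)+3) - (d:ℝ)*((c:ℝ)+1)) := by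
  have hc1 : (0:ℝ) < (c:ℝ)+1 := by positivity
  have hA0 : 0 < A := by rw [hA_def]; positivity
  have hsx : x*(((c:ℝ)+1)*s) = (c:ℝ)+2 := by rw [hx_def]; field_simp
  have hw : 0 < ρ*((c:ℝ)+3) - (d:ℝ)*((c:ℝ)+1) := by linarith [hρc2]
  have hAe : ((c:ℝ)+1)*A = ((c:ℝ)+2) - ((c:ℝ)+1)*s := by rw [hs_def]; field_simp; ring
  have hswe : s = (ρ*((c:ℝ)+3) - (d:ℝ)*((c:ℝ)+1))/(2*ρ*((c:ℝ)+1)) := by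
    rw [hs_def, hA_def]; field_simp; ring
  have t3 : ∀ j ∈ Finset.range Pm,
      ((bN (j+1) - auxA c j : ℕ):ℝ) ≤ ((j:ℝ)+1)*A + 1 - ((auxA c j : ℕ):ℝ) := by
    intro j hj
    have hjPm : j < Pm := Finset.mem_range.mp hj
    have hj1x : ((j:ℝ)+1) ≤ x := by
      have h1 : ((j:ℝ)+1) ≤ (Pm:ℝ) := by exact_mod_cast hjPm
      linarith [hPmx]
    have hprod : ((j:ℝ)+1)*(((c:ℝ)+1)*s) ≤ (c:ℝ)+2 := by
      have h2 := mul_le_mul_of_nonneg_right hj1x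
        (le_of_lt (by positivity : (0:ℝ) < ((c:ℝ)+1)*s))
      rw [hsx] at h2; exact h2
    have hcj : ((c:ℝ)+2)*(j:ℝ) ≤ ((j:ℝ)+1)*(((c:ℝ)+1)*A) := by nlinarith [hprod, hAe]
    have hau : ((auxA c j : ℕ):ℝ) ≤ ((j:ℝ)+1)*A + 1 := by
      have hle := auxA_mul_le c j
      have hle' : ((c:ℝ)+1)*((auxA c j : ℕ):ℝ) ≤ ((c:ℝ)+2)*(j:ℝ) + (c:ℝ) := by
        exact_mod_cast hle
      have h3 : ((c:ℝ)+1)*((auxA c j : ℕ):ℝ) ≤ ((c:ℝ)+1)*(((j:ℝ)+1)*A + 1) := by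
        nlinarith [hle', hcj]
      exact le_of_mul_le_mul_left h3 hc1
    rcases le_total (auxA c j) (bN (j+1)) with h | h
    · rw [Nat.cast_sub h]
      have hbn : ((bN (j+1) : ℕ):ℝ) ≤ ((j:ℝ)+1)*A + 1 := by
        simp only [hbN_def]
        push_cast
        have h4 := Nat.floor_le (mul_nonneg (by positivity : (0:ℝ) ≤ (j:ℝ)+1) hA0.le)
        linarith [h4]
      linarith
    · rw [Nat.sub_eq_zero_of_le h]
      push_cast
      linarith [hau]
  have hXle : ((∑ j ∈ Finset.range Pm, (bN (j+1) - auxA c j) : ℕ):ℝ)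
      ≤ ∑ j ∈ Finset.range Pm, (((j:ℝ)+1)*A + 1 - ((auxA c j : ℕ):ℝ)) := by
    push_cast
    exact Finset.sum_le_sum t3
  rw [sum_shape c Pm A] at hXle
  have hSn := Sn_ge c Pm hPm1
  have hg0 : (0:ℝ) ≤ ((c:ℝ)+2) - (Pm:ℝ)*(((c:ℝ)+1)*s) := by
    have h5 := mul_le_mul_of_nonneg_right hPmx
      (le_of_lt (by positivity : (0:ℝ) < ((c:ℝ)+1)*s))
    rw [hsx] at h5; linarith
  have hId : (1 + (ρ+(d:ℝ))*((c:ℝ)+2)/(ρ*((c:ℝ)+3) - (d:ℝ)*((c:ℝ)+1)))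
      - (A*((Pm:ℝ)*((Pm:ℝ)+1))/2 + (Pm:ℝ) - ((Pm:ℝ)*((Pm:ℝ)-1)/2
          + ((((Pm:ℝ)-1)^2)/(2*((c:ℝ)+1)) + ((Pm:ℝ)-1)/2)))
      = (((c:ℝ)+2) - (Pm:ℝ)*(((c:ℝ)+1)*s))*(A*((c:ℝ)+1)
          + (((c:ℝ)+2) - (Pm:ℝ)*(((c:ℝ)+1)*s)))/(2*((c:ℝ)+1)^2*s) := by
    have hwne : ρ*((c:ℝ)+3) - (d:ℝ)*((c:ℝ)+1) ≠ 0 := ne_of_gt hw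
    rw [hswe, hA_def]
    field_simp
    ring
  have hpos : (0:ℝ) ≤ (((c:ℝ)+2) - (Pm:ℝ)*(((c:ℝ)+1)*s))*(A*((c:ℝ)+1)
      + (((c:ℝ)+2) - (Pm:ℝ)*(((c:ℝ)+1)*s)))/(2*((c:ℝ)+1)^2*s) := by
    apply div_nonneg
    · exact mul_nonneg hg0 (add_nonneg (mul_nonneg hA0.le hc1.le) hg0)
    · positivity
  linarith [hXle, hSn, hId, hpos]

set_option maxHeartbeats 1000000 in
/-- Bounds for `h⁰_F(N,d,ρ)`, the number of negative-homogeneous index pairs: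
for `ρ_c < ρ ≤ 2` and all sufficiently small `κ > 0`,
`(ρ+d)/(N+1) · (ρ-ρ_c)⁻¹ ≤ h⁰ ≤ 1 + (ρ+d)N/(N+1) · (ρ-ρ_c)⁻¹`,
where `ρ_c = d(N-1)/(N+1)`. -/
theorem h0F_bounds (N d : ℕ) (hN : 2 ≤ N) (hd : 1 ≤ d) (ρ : ℝ)
    (hρc : (d : ℝ) * ((N : ℝ) - 1) / ((N : ℝ) + 1) < ρ) (hρ2 : ρ ≤ 2) :
    ∃ κ₀ > (0 : ℝ), ∀ κ : ℝ, 0 < κ → κ < κ₀ →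
      (ρ + (d : ℝ)) / ((N : ℝ) + 1)
          * (ρ - (d : ℝ) * ((N : ℝ) - 1) / ((N : ℝ) + 1))⁻¹
        ≤ (Nat.card (negHomogPairs N d ρ κ) : ℝ)
      ∧ (Nat.card (negHomogPairs N d ρ κ) : ℝ)
        ≤ 1 + (ρ + (d : ℝ)) * (N : ℝ) / ((N : ℝ) + 1)
            * (ρ - (d : ℝ) * ((N : ℝ) - 1) / ((N : ℝ) + 1))⁻¹ := by
  obtain ⟨c, rfl⟩ : ∃ c, N = c + 2 := ⟨N - 2, by omega⟩
  push_cast at hρc ⊢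
  have hd1 : (1:ℝ) ≤ (d:ℝ) := by exact_mod_cast hd
  have hc0 : (0:ℝ) ≤ (c:ℝ) := Nat.cast_nonneg c
  have hρc2 : (d:ℝ)*((c:ℝ)+1) < ρ*((c:ℝ)+3) := by
    rw [div_lt_iff₀ (by positivity)] at hρc
    nlinarith [hρc]
  have hρ0 : 0 < ρ := by nlinarith [hρc2, hd1, hc0]
  set w : ℝ := ρ*((c:ℝ)+3) - (d:ℝ)*((c:ℝ)+1) with hw_def
  have hw : 0 < w := by rw [hw_def]; linarith [hρc2]
  set A : ℝ := (ρ + (d:ℝ))/(2*ρ) with hA_def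
  have hA0 : 0 < A := by rw [hA_def]; positivity
  set s : ℝ := ((c:ℝ)+2)/((c:ℝ)+1) - A with hs_def
  have hsw : s = w/(2*ρ*((c:ℝ)+1)) := by
    rw [hs_def, hA_def, hw_def]; field_simp; ring
  have hs0 : 0 < s := by rw [hsw]; positivity
  have hAe : ((c:ℝ)+1)*A = ((c:ℝ)+2) - ((c:ℝ)+1)*s := by
    rw [hs_def]; field_simp; ring
  set x : ℝ := ((c:ℝ)+2)/(((c:ℝ)+1)*s) with hx_def
  have hx0 : 0 < x := by rw [hx_def]; positivity
  have hsx : x*(((c:ℝ)+1)*s) = (c:ℝ)+2 := by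
    rw [hx_def]; field_simp
  have hx1 : 1 < x := by
    rw [hx_def, lt_div_iff₀ (by positivity)]
    nlinarith [hAe, mul_pos (by positivity : (0:ℝ) < (c:ℝ)+1) hA0]
  set Pm : ℕ := ⌊x⌋₊ with hPm_def
  have hPm1 : 1 ≤ Pm := Nat.le_floor (by exact_mod_cast hx1.le)
  have hPmx : (Pm:ℝ) ≤ x := Nat.floor_le hx0.le
  have hxPm : x < (Pm:ℝ) + 1 := Nat.lt_floor_add_one x
  set bN : ℕ → ℕ := fun p => ⌊(p:ℝ)*A⌋₊ + 1 with hbN_def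
  -- κ₀
  set κ₁ : ℝ := ρ*(s - ((c:ℝ)+2)/(((c:ℝ)+1)*((Pm:ℝ)+1))) with hκ₁_def
  have hgap : ((c:ℝ)+2)/(((c:ℝ)+1)*((Pm:ℝ)+1)) < s := by
    rw [div_lt_iff₀ (by positivity)]
    have h := mul_lt_mul_of_pos_right hxPm (by positivity : (0:ℝ) < ((c:ℝ)+1)*s)
    rw [hsx] at h
    nlinarith [h]
  have hκ₁pos : 0 < κ₁ := by
    rw [hκ₁_def]; exact mul_pos hρ0 (by linarith)
  have hne : (Finset.Icc 1 Pm).Nonempty := ⟨1, Finset.mem_Icc.mpr ⟨le_rfl, hPm1⟩⟩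
  set κ₂ : ℝ := (Finset.Icc 1 Pm).inf' hne
    (fun p => ρ*(((⌊(p:ℝ)*A⌋₊:ℝ) + 1) - (p:ℝ)*A)/(p:ℝ)) with hκ₂_def
  have hκ₂pos : 0 < κ₂ := by
    rw [hκ₂_def, Finset.lt_inf'_iff]
    intro p hp
    have hp1 : 1 ≤ p := (Finset.mem_Icc.mp hp).1
    have hpr : (0:ℝ) < (p:ℝ) := by exact_mod_cast hp1
    have hfl : (p:ℝ)*A < (⌊(p:ℝ)*A⌋₊:ℝ) + 1 := Nat.lt_floor_add_one _
    apply div_pos (mul_pos hρ0 (by linarith)) hpr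
  clear_value w A s x Pm bN κ₁ κ₂
  refine ⟨min κ₁ κ₂, lt_min hκ₁pos hκ₂pos, ?_⟩
  intro κ hκ0 hκκ
  have hκ1 : κ < κ₁ := lt_of_lt_of_le hκκ (min_le_left _ _)
  have hκ2 : κ < κ₂ := lt_of_lt_of_le hκκ (min_le_right _ _)
  -- hypotheses for the set lemma
  have hκgap : ((c:ℝ)+2)/(((c:ℝ)+1)*((Pm:ℝ)+1)) < s - κ/ρ := by
    rw [hκ₁_def] at hκ1
    have : κ/ρ < s - ((c:ℝ)+2)/(((c:ℝ)+1)*((Pm:ℝ)+1)) := by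
      rw [div_lt_iff₀ hρ0]; nlinarith [hκ1]
    linarith
  have hκf : ∀ p : ℕ, 1 ≤ p → p ≤ Pm →
      ((p:ℝ))*κ < ρ*(((⌊(p:ℝ)*A⌋₊:ℝ) + 1) - (p:ℝ)*A) := by
    intro p hp1 hpPm
    have hpr : (0:ℝ) < (p:ℝ) := by exact_mod_cast hp1
    have hinf : κ₂ ≤ ρ*(((⌊(p:ℝ)*A⌋₊:ℝ) + 1) - (p:ℝ)*A)/(p:ℝ) := by
      rw [hκ₂_def]
      exact Finset.inf'_le _ (Finset.mem_Icc.mpr ⟨hp1, hpPm⟩)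
    have hκp : κ < ρ*(((⌊(p:ℝ)*A⌋₊:ℝ) + 1) - (p:ℝ)*A)/(p:ℝ) := lt_of_lt_of_le hκ2 hinf
    rw [lt_div_iff₀ hpr] at hκp
    nlinarith [hκp]
  have hset := negHomog_set_eq hρ0 hκ0 hA_def hs_def hbN_def hκgap hκf
  have hdisj : ∀ j₁ ∈ Finset.range Pm, ∀ j₂ ∈ Finset.range Pm, j₁ ≠ j₂ →
      Disjoint ({j₁+1} ×ˢ Finset.Ico (auxA c j₁) (bN (j₁+1)))
        ({j₂+1} ×ˢ Finset.Ico (auxA c j₂) (bN (j₂+1))) := by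
    intro j₁ _ j₂ _ hne12
    rw [Finset.disjoint_left]
    rintro ⟨p, q⟩ h1 h2
    rw [Finset.mem_product, Finset.mem_singleton] at h1 h2
    obtain ⟨e1, _⟩ := h1
    obtain ⟨e2, _⟩ := h2
    simp only [Prod.fst] at e1 e2
    omega
  have hcard : Nat.card (negHomogPairs (c+2) d ρ κ)
      = ∑ j ∈ Finset.range Pm, (bN (j+1) - auxA c j) := by
    rw [hset, Nat.card_coe_set_eq, Set.ncard_coe_finset,
      Finset.card_biUnion hdisj]
    refine Finset.sum_congr rfl fun j _ => ?_
    rw [Finset.card_product, Finset.card_singleton, Nat.card_Ico, one_mul]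
  rw [hcard]
  -- rewrite target expressions
  have hbase : ρ - (d:ℝ)*((c:ℝ)+2-1)/((c:ℝ)+2+1) = w/((c:ℝ)+3) := by
    rw [hw_def]; field_simp; ring
  have hLgoal : (ρ+(d:ℝ))/((c:ℝ)+2+1) * (ρ - (d:ℝ)*((c:ℝ)+2-1)/((c:ℝ)+2+1))⁻¹
      = (ρ+(d:ℝ))/w := by
    rw [hbase, inv_div]
    field_simp
    ring
  have hRgoal : 1 + (ρ+(d:ℝ))*((c:ℝ)+2)/((c:ℝ)+2+1) * (ρ - (d:ℝ)*((c:ℝ)+2-1)/((c:ℝ)+2+1))⁻¹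
      = 1 + (ρ+(d:ℝ))*((c:ℝ)+2)/w := by
    rw [hbase, inv_div]
    field_simp
    ring
  rw [hLgoal, hRgoal, hw_def]
  constructor
  · exact lower_bound_sum c d ρ A s x Pm bN hd1 hρ0 hρ2 hρc2 hA_def hs_def hs0
      hx_def hbN_def hPm1 hPmx hxPm
  · exact upper_bound_sum c d ρ A s x Pm bN hd1 hρ0 hρ2 hρc2 hA_def hs_def hs0
      hx_def hbN_def hPm1 hPmx hxPm
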